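/- The quartic polynomials f(x) = x²(x+3)² and g(x) = −3x³(x+2) over ℚ have the same multiset of finite critical values, namely {0, 0, 81/16}, but there is no affine transformation λ(x) = ax+b with a ≠ 0 such that f = g∘λ. -/
import Mathlib


open Polynomial

theorem stmt1 :
    let f : ℂ[X] := X ^ 2 * (X + 3) ^ 2
    let g : ℂ[X] := -3 * X ^ 3 * (X + 2)
    ((derivative f).roots.map (fun x => f.eval x)) = {0, 0, 81 / 16} ∧
    ((derivative g).roots.map (fun x => g.eval x)) = {0, 0, 81 / 16} ∧
    ¬ ∃ a b : ℂ, a ≠ 0 ∧ f = g.comp (C a * X + C b) := by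
  intro f g
  refine ⟨?_, ?_, ?_⟩
  · show ((derivative ((X:ℂ[X])^2*(X+3)^2)).roots.map
      (fun x : ℂ => ((X:ℂ[X])^2*(X+3)^2).eval x)) = ({0, 0, 81 / 16} : Multiset ℂ)
    have hd : derivative ((X:ℂ[X])^2*(X+3)^2)
        = C 4 * ((X - C 0) * ((X - C (-3)) * (X - C (-3/2)))) := by
      apply Polynomial.funext; intro x; simp [derivative_mul, derivative_pow]; ring
    rw [hd, roots_C_mul _ (by norm_num),
      roots_mul (mul_ne_zero (X_sub_C_ne_zero 0)
        (mul_ne_zero (X_sub_C_ne_zero (-3)) (X_sub_C_ne_zero (-3/2)))),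
      roots_mul (mul_ne_zero (X_sub_C_ne_zero (-3)) (X_sub_C_ne_zero (-3/2))),
      roots_X_sub_C, roots_X_sub_C, roots_X_sub_C]
    norm_num
  · show ((derivative ((-3:ℂ[X])*X^3*(X+2))).roots.map
      (fun x : ℂ => ((-3:ℂ[X])*X^3*(X+2)).eval x)) = ({0, 0, 81 / 16} : Multiset ℂ)
    have hd : derivative ((-3:ℂ[X])*X^3*(X+2))
        = C (-12) * ((X - C 0) * ((X - C 0) * (X - C (-3/2)))) := by
      apply Polynomial.funext; intro x; simp [derivative_mul, derivative_pow]; ring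
    rw [hd, roots_C_mul _ (by norm_num),
      roots_mul (mul_ne_zero (X_sub_C_ne_zero 0)
        (mul_ne_zero (X_sub_C_ne_zero 0) (X_sub_C_ne_zero (-3/2)))),
      roots_mul (mul_ne_zero (X_sub_C_ne_zero 0) (X_sub_C_ne_zero (-3/2))),
      roots_X_sub_C, roots_X_sub_C]
    norm_num
  · rintro ⟨a, b, ha, heq⟩
    have E0 := congrArg (eval (0:ℂ)) heq
    have E1 := congrArg (eval (1:ℂ)) heq
    have E2 := congrArg (eval (-1:ℂ)) heq
    have E3 := congrArg (eval (2:ℂ)) heq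
    have E4 := congrArg (eval (-2:ℂ)) heq
    simp [f, g, eval_comp] at E0 E1 E2 E3 E4
    have F0 : (3:ℂ)*b^4 + 6*b^3 = 0 := by
      rcases E0 with h | h
      · linear_combination (3*b^3+6*b^2)*h
      · linear_combination 3*b^3*h
    have F1 : (3:ℂ)*(a+b)^4 + 6*(a+b)^3 + 16 = 0 := by linear_combination E1
    have F2 : (3:ℂ)*(b-a)^4 + 6*(b-a)^3 + 4 = 0 := by linear_combination E2
    have F3 : (3:ℂ)*(2*a+b)^4 + 6*(2*a+b)^3 + 100 = 0 := by linear_combination E3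
    have F4 : (3:ℂ)*(b-2*a)^4 + 6*(b-2*a)^3 + 4 = 0 := by linear_combination E4
    have hc1 : a*(12*b^3+18*b^2) = 0 := by
      linear_combination (2/3)*F1 - (2/3)*F2 - (1/12)*F3 + (1/12)*F4
    have hb1 : (12:ℂ)*b^3+18*b^2 = 0 := by
      rcases mul_eq_zero.mp hc1 with h | h
      · exact absurd h ha
      · exact h
    have hb3 : b^3 = 0 := by linear_combination (2/3)*F0 - (b/6)*hb1
    have hb : b = 0 := pow_eq_zero_iff (by norm_num) |>.mp hb3
    have hc3 : (12:ℂ)*a^3*b + 6*a^3 + 6 = 0 := by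
      linear_combination (-1/6)*F1 + (1/6)*F2 + (1/12)*F3 - (1/12)*F4
    have hc4 : (3:ℂ)*a^4 + 1 = 0 := by
      linear_combination (1/4)*F0 - (1/6)*F1 - (1/6)*F2 + (1/24)*F3 + (1/24)*F4
    have hA3 : a^3 = -1 := by linear_combination (1/6)*hc3 - 2*a^3*hb
    have hA4 : a^4 = -1/3 := by linear_combination (1/3)*hc4
    have hA : a = 1/3 := by linear_combination a*hA3 - hA4
    have h10 : (1:ℂ) = 0 := by
      linear_combination (-27/28)*(a^2+a/3+1/9)*hA + (27/28)*hA3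
    exact one_ne_zero h10
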